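/- arXiv:1804.09068 — 2 statements merged into one kernel-verified Lean document; each statement's English description precedes it below -/
import Mathlib

section
/- For the preprojective algebra ΠA_2, the Ext groups between the simple modules satisfy: Ext^n(S_1, S_1) is 1-dimensional when n is even and 0 when n is odd, and Ext^n(S_1, S_2) is 1-dimensional when n is odd and 0 when n is even. -/
/-- A presentation of the preprojective algebra `ΠA₂` of the `A₂` quiver: a
4-dimensional `k`-algebra with basis the orthogonal vertex idempotents `e₁, e₂`
(summing to `1`) and the two arrows `a = e₂ a e₁`, `b = e₁ b e₂`, subject to the
preprojective relations `a b = 0 = b a`. -/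
structure PiA2Data (k A : Type) [Field k] [Ring A] [Algebra k A] : Type where
  e1 : A
  e2 : A
  a : A
  b : A
  he1 : e1 * e1 = e1
  he2 : e2 * e2 = e2
  h12 : e1 * e2 = 0
  h21 : e2 * e1 = 0
  hsum : e1 + e2 = 1
  ha : e2 * a * e1 = a
  hb : e1 * b * e2 = b
  hab : a * b = 0
  hba : b * a = 0
  basis : Module.Basis (Fin 4) k A
  hbasis : ⇑basis = ![e1, e2, a, b]

variable {k A : Type} [Field k] [Ring A] [Algebra k A] (D : PiA2Data k A)

/-- The indecomposable projective left module `P₁ = (ΠA₂)e₁`, as a left ideal. -/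
def P1 : Submodule A A := Submodule.span A {D.e1}

/-- The indecomposable projective left module `P₂ = (ΠA₂)e₂`, as a left ideal. -/
def P2 : Submodule A A := Submodule.span A {D.e2}

open CategoryTheory

namespace PiA2Aux

/-! ### Multiplication lemmas -/

lemma ae1 : D.a * D.e1 = D.a := by
  conv_lhs => rw [← D.ha]
  rw [mul_assoc, D.he1, D.ha]

lemma e2a : D.e2 * D.a = D.a := by
  conv_lhs => rw [← D.ha]
  rw [← mul_assoc, ← mul_assoc, D.he2, D.ha]

lemma e1a : D.e1 * D.a = 0 := by
  conv_lhs => rw [← D.ha]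
  rw [← mul_assoc, ← mul_assoc, D.h12, zero_mul, zero_mul]

lemma ae2 : D.a * D.e2 = 0 := by
  conv_lhs => rw [← D.ha]
  rw [mul_assoc, D.h12, mul_zero]

lemma be2 : D.b * D.e2 = D.b := by
  conv_lhs => rw [← D.hb]
  rw [mul_assoc, D.he2, D.hb]

lemma e1b : D.e1 * D.b = D.b := by
  conv_lhs => rw [← D.hb]
  rw [← mul_assoc, ← mul_assoc, D.he1, D.hb]

lemma e2b : D.e2 * D.b = 0 := by
  conv_lhs => rw [← D.hb]
  rw [← mul_assoc, ← mul_assoc, D.h21, zero_mul, zero_mul]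

lemma be1 : D.b * D.e1 = 0 := by
  conv_lhs => rw [← D.hb]
  rw [mul_assoc, D.h21, mul_zero]

lemma a_ne : D.a ≠ 0 := by
  have h := D.basis.ne_zero 2
  rw [D.hbasis] at h
  simpa using h

lemma b_ne : D.b ≠ 0 := by
  have h := D.basis.ne_zero 3
  rw [D.hbasis] at h
  simpa using h

lemma indep {c0 c1 c2 c3 : k}
    (h : c0 • D.e1 + c1 • D.e2 + c2 • D.a + c3 • D.b = 0) :
    c0 = 0 ∧ c1 = 0 ∧ c2 = 0 ∧ c3 = 0 := by
  have hli := Fintype.linearIndependent_iff.mp D.basis.linearIndependent ![c0, c1, c2, c3] ?_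
  · exact ⟨hli 0, hli 1, hli 2, hli 3⟩
  · rw [Fin.sum_univ_four]
    rw [D.hbasis]
    simpa using h

lemma decomp (u : A) :
    ∃ c0 c1 c2 c3 : k, u = c0 • D.e1 + c1 • D.e2 + c2 • D.a + c3 • D.b := by
  have h := D.basis.sum_repr u
  rw [Fin.sum_univ_four] at h
  refine ⟨D.basis.repr u 0, D.basis.repr u 1, D.basis.repr u 2, D.basis.repr u 3, ?_⟩
  conv_lhs => rw [← h]
  rw [D.hbasis]
  simp only [Matrix.cons_val_zero, Matrix.cons_val_one, Matrix.head_cons,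
    Matrix.cons_val_two, Matrix.tail_cons, Matrix.cons_val_three]

/-! ### Membership in `P1`, `P2` -/

lemma e1_mem : D.e1 ∈ P1 D := Submodule.mem_span_singleton_self _

lemma e2_mem : D.e2 ∈ P2 D := Submodule.mem_span_singleton_self _

lemma a_mem : D.a ∈ P1 D :=
  Submodule.mem_span_singleton.mpr ⟨D.a, by rw [smul_eq_mul, ae1]⟩

lemma b_mem : D.b ∈ P2 D :=
  Submodule.mem_span_singleton.mpr ⟨D.b, by rw [smul_eq_mul, be2]⟩

lemma mem_P1_iff {x : A} : x ∈ P1 D ↔ ∃ c d : k, x = c • D.e1 + d • D.a := by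
  constructor
  · intro hx
    obtain ⟨u, hu⟩ := Submodule.mem_span_singleton.mp hx
    obtain ⟨c0, c1, c2, c3, hc⟩ := decomp D u
    refine ⟨c0, c2, ?_⟩
    rw [← hu, smul_eq_mul, hc]
    rw [add_mul, add_mul, add_mul, smul_mul_assoc, smul_mul_assoc, smul_mul_assoc,
      smul_mul_assoc, D.he1, D.h21, ae1, be1, smul_zero, smul_zero, add_zero, add_zero]
  · rintro ⟨c, d, rfl⟩
    refine Submodule.add_mem _ ?_ ?_
    · rw [← algebraMap_smul A c D.e1]
      exact Submodule.smul_mem _ _ (e1_mem D)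
    · rw [← algebraMap_smul A d D.a]
      exact Submodule.smul_mem _ _ (a_mem D)

lemma mem_P2_iff {x : A} : x ∈ P2 D ↔ ∃ c d : k, x = c • D.e2 + d • D.b := by
  constructor
  · intro hx
    obtain ⟨u, hu⟩ := Submodule.mem_span_singleton.mp hx
    obtain ⟨c0, c1, c2, c3, hc⟩ := decomp D u
    refine ⟨c1, c3, ?_⟩
    rw [← hu, smul_eq_mul, hc]
    rw [add_mul, add_mul, add_mul, smul_mul_assoc, smul_mul_assoc, smul_mul_assoc,
      smul_mul_assoc, D.he2, D.h12, ae2, be2, smul_zero, smul_zero, zero_add, add_zero]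
  · rintro ⟨c, d, rfl⟩
    refine Submodule.add_mem _ ?_ ?_
    · rw [← algebraMap_smul A c D.e2]
      exact Submodule.smul_mem _ _ (e2_mem D)
    · rw [← algebraMap_smul A d D.b]
      exact Submodule.smul_mem _ _ (b_mem D)

lemma P1_mul_e1 {x : A} (hx : x ∈ P1 D) : x * D.e1 = x := by
  obtain ⟨c, d, rfl⟩ := (mem_P1_iff D).mp hx
  rw [add_mul, smul_mul_assoc, smul_mul_assoc, D.he1, ae1]

lemma P2_mul_e2 {x : A} (hx : x ∈ P2 D) : x * D.e2 = x := by
  obtain ⟨c, d, rfl⟩ := (mem_P2_iff D).mp hx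
  rw [add_mul, smul_mul_assoc, smul_mul_assoc, D.he2, be2 D]

/-! ### The projective modules as objects of `ModuleCat A` -/

noncomputable section

abbrev M1 : ModuleCat A := ModuleCat.of A (P1 D)

abbrev M2 : ModuleCat A := ModuleCat.of A (P2 D)

def e1' : P1 D := ⟨D.e1, e1_mem D⟩
def e2' : P2 D := ⟨D.e2, e2_mem D⟩
def aP : P1 D := ⟨D.a, a_mem D⟩
def bP : P2 D := ⟨D.b, b_mem D⟩

lemma P1_gen (x : P1 D) : (x : A) • e1' D = x := by
  apply Subtype.ext
  show (x : A) * D.e1 = (x : A)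
  exact P1_mul_e1 D x.2

lemma P2_gen (x : P2 D) : (x : A) • e2' D = x := by
  apply Subtype.ext
  show (x : A) * D.e2 = (x : A)
  exact P2_mul_e2 D x.2

/-- The retraction `A → P1`, `x ↦ x e₁`. -/
def retr1 : A →ₗ[A] P1 D where
  toFun x := ⟨x * D.e1, Submodule.mem_span_singleton.mpr ⟨x, rfl⟩⟩
  map_add' x y := by apply Subtype.ext; simp [add_mul]
  map_smul' r x := by apply Subtype.ext; simp [mul_assoc]

def retr2 : A →ₗ[A] P2 D where
  toFun x := ⟨x * D.e2, Submodule.mem_span_singleton.mpr ⟨x, rfl⟩⟩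
  map_add' x y := by apply Subtype.ext; simp [add_mul]
  map_smul' r x := by apply Subtype.ext; simp [mul_assoc]

instance projM1 : Projective (M1 D) := by
  apply (IsProjective.iff_projective _).mp
  refine Module.Projective.of_split (Submodule.subtype _) (retr1 D) ?_
  ext x
  exact congrArg Subtype.val (P1_gen D x)

instance projM2 : Projective (M2 D) := by
  apply (IsProjective.iff_projective _).mp
  refine Module.Projective.of_split (Submodule.subtype _) (retr2 D) ?_
  ext x
  exact congrArg Subtype.val (P2_gen D x)

/-- Right multiplication by `a`, as a map `P2 → P1`. -/
def raL : P2 D →ₗ[A] P1 D where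
  toFun x := ⟨x.1 * D.a, Submodule.mem_span_singleton.mpr
    ⟨x.1 * D.a, by rw [smul_eq_mul, mul_assoc, ae1 D]⟩⟩
  map_add' x y := by apply Subtype.ext; simp [add_mul]
  map_smul' r x := by apply Subtype.ext; simp [mul_assoc]

def rbL : P1 D →ₗ[A] P2 D where
  toFun x := ⟨x.1 * D.b, Submodule.mem_span_singleton.mpr
    ⟨x.1 * D.b, by rw [smul_eq_mul, mul_assoc, be2 D]⟩⟩
  map_add' x y := by apply Subtype.ext; simp [add_mul]
  map_smul' r x := by apply Subtype.ext; simp [mul_assoc]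

def ra : M2 D ⟶ M1 D := ModuleCat.ofHom (raL D)

def rb : M1 D ⟶ M2 D := ModuleCat.ofHom (rbL D)

lemma ra_rb : ra D ≫ rb D = 0 := by
  apply ModuleCat.hom_ext
  apply LinearMap.ext
  intro x
  apply Subtype.ext
  show (x.1 * D.a) * D.b = 0
  rw [mul_assoc, D.hab, mul_zero]

lemma rb_ra : rb D ≫ ra D = 0 := by
  apply ModuleCat.hom_ext
  apply LinearMap.ext
  intro x
  apply Subtype.ext
  show (x.1 * D.b) * D.a = 0
  rw [mul_assoc, D.hba, mul_zero]

lemma comp_ra_eq_zero {Y : ModuleCat A} (hY : ∀ y : Y, D.a • y = 0) (g : M1 D ⟶ Y) :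
    ra D ≫ g = 0 := by
  apply ModuleCat.hom_ext
  apply LinearMap.ext
  intro x
  show g (raL D x) = 0
  have h2 : aP D = D.a • e1' D := by
    apply Subtype.ext
    show D.a = D.a * D.e1
    rw [ae1 D]
  have h1 : raL D x = x.1 • aP D := rfl
  rw [h1, h2, map_smul, map_smul, hY, smul_zero]

lemma comp_rb_eq_zero {Y : ModuleCat A} (hY : ∀ y : Y, D.b • y = 0) (g : M2 D ⟶ Y) :
    rb D ≫ g = 0 := by
  apply ModuleCat.hom_ext
  apply LinearMap.ext
  intro x
  show g (rbL D x) = 0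
  have h2 : bP D = D.b • e2' D := by
    apply Subtype.ext
    show D.b = D.b * D.e2
    rw [be2 D]
  have h1 : rbL D x = x.1 • bP D := rfl
  rw [h1, h2, map_smul, map_smul, hY, smul_zero]

/-! ### The 2-periodic complex -/

def par : ℕ → Bool
  | 0 => true
  | n + 1 => !(par n)

lemma par_true_iff : ∀ n, (par n = true ↔ Even n) := by
  intro n
  induction n with
  | zero => simp [par]
  | succ m ih =>
    rw [show par (m + 1) = !(par m) from rfl, Nat.even_add_one]
    cases h : par m <;> simp_all

def Q : Bool → ModuleCat A
  | true => M1 D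
  | false => M2 D

def r : (s : Bool) → Q D (!s) ⟶ Q D s
  | true => ra D
  | false => rb D

def cx : ChainComplex (ModuleCat A) ℕ :=
  ChainComplex.of (fun n => Q D (par n)) (fun n => r D (par n))
    (fun n => by
      show r D (!(par n)) ≫ r D (par n) = 0
      cases h : par n
      · exact ra_rb D
      · exact rb_ra D)

lemma cx_d (n : ℕ) : (cx D).d (n + 1) n = r D (par n) :=
  ChainComplex.of_d (fun n => Q D (par n)) (fun n => r D (par n)) n

instance cx_proj (n : ℕ) : Projective ((cx D).X n) := by
  show Projective (Q D (par n))
  cases par n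
  · show Projective (M2 D); infer_instance
  · show Projective (M1 D); infer_instance

/-- Exactness of the periodic complex away from degree 0. -/
lemma rr_exact (sb : Bool) (x : (Q D (!sb) : Type)) (hx : (r D sb) x = 0) :
    ∃ y : (Q D (!(!sb)) : Type), (r D (!sb)) y = x := by
  cases sb
  · -- x : P1 with x * b = 0; find y : P2 with y * a = x
    show ∃ y : P2 D, raL D y = x
    have hx' : (rbL D) x = 0 := hx
    obtain ⟨c, d, hcd⟩ := (mem_P1_iff D).mp x.2
    have hxb : x.1 * D.b = 0 := congrArg Subtype.val hx'
    rw [hcd, add_mul, smul_mul_assoc, smul_mul_assoc, e1b D, D.hab, smul_zero,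
      add_zero] at hxb
    have hc : c = 0 := by
      have h0 : (0 : k) • D.e1 + (0 : k) • D.e2 + (0 : k) • D.a + c • D.b = 0 := by
        simpa using hxb
      exact (indep D h0).2.2.2
    refine ⟨⟨d • D.e2, ?_⟩, ?_⟩
    · rw [← algebraMap_smul A d D.e2]
      exact Submodule.smul_mem _ _ (e2_mem D)
    · apply Subtype.ext
      show (d • D.e2) * D.a = x.1
      rw [smul_mul_assoc, e2a D, hcd, hc, zero_smul, zero_add]
  · -- x : P2 with x * a = 0; find y : P1 with y * b = x
    show ∃ y : P1 D, rbL D y = x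
    have hx' : (raL D) x = 0 := hx
    obtain ⟨c, d, hcd⟩ := (mem_P2_iff D).mp x.2
    have hxa : x.1 * D.a = 0 := congrArg Subtype.val hx'
    rw [hcd, add_mul, smul_mul_assoc, smul_mul_assoc, e2a D, D.hba, smul_zero,
      add_zero] at hxa
    have hc : c = 0 := by
      have h0 : (0 : k) • D.e1 + (0 : k) • D.e2 + c • D.a + (0 : k) • D.b = 0 := by
        simpa using hxa
      exact (indep D h0).2.2.1
    refine ⟨⟨d • D.e1, ?_⟩, ?_⟩
    · rw [← algebraMap_smul A d D.e1]
      exact Submodule.smul_mem _ _ (e1_mem D)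
    · apply Subtype.ext
      show (d • D.e1) * D.b = x.1
      rw [smul_mul_assoc, e1b D, hcd, hc, zero_smul, zero_add]

lemma cx_exactAt_succ (n : ℕ) : (cx D).ExactAt (n + 1) := by
  rw [HomologicalComplex.exactAt_iff' _ (n + 2) (n + 1) n (by simp) (by simp)]
  rw [ShortComplex.moduleCat_exact_iff]
  intro x hx
  have hg : (cx D).d (n + 1) n = r D (par n) := cx_d D n
  have hf : (cx D).d (n + 2) (n + 1) = r D (par (n + 1)) := cx_d D (n + 1)
  have hx' : (r D (par n)) x = 0 := by
    rw [← hg]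
    exact hx
  obtain ⟨y, hy⟩ := rr_exact D (par n) x hx'
  refine ⟨y, ?_⟩
  show ((cx D).d (n + 2) (n + 1)) y = x
  rw [hf]
  exact hy

/-! ### Simple modules on which the idempotents act -/

section Simple

variable {S : Type} [AddCommGroup S] [Module A S]

lemma e2_act_zero (h1 : ∀ x : S, D.e1 • x = x) (x : S) : D.e2 • x = 0 := by
  have h : (D.e1 + D.e2) • x = (1 : A) • x := by rw [D.hsum]
  rw [add_smul, one_smul, h1] at h
  exact add_eq_left.mp h

lemma e1_act_zero (h2 : ∀ x : S, D.e2 • x = x) (x : S) : D.e1 • x = 0 := by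
  have h : (D.e1 + D.e2) • x = (1 : A) • x := by rw [D.hsum]
  rw [add_smul, one_smul, h2] at h
  exact add_eq_right.mp h

lemma act_scalar₁ (h1 : ∀ x : S, D.e1 • x = x) (ha0 : ∀ x : S, D.a • x = 0)
    (hb0 : ∀ x : S, D.b • x = 0) (u : A) (x : S) :
    ∃ c : k, u • x = algebraMap k A c • x := by
  obtain ⟨c0, c1, c2, c3, hc⟩ := decomp D u
  refine ⟨c0, ?_⟩
  rw [hc, add_smul, add_smul, add_smul]
  rw [Algebra.smul_def c0, Algebra.smul_def c1, Algebra.smul_def c2, Algebra.smul_def c3]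
  rw [mul_smul, mul_smul, mul_smul, mul_smul]
  rw [h1, e2_act_zero D h1, ha0, hb0, smul_zero, smul_zero, smul_zero, add_zero,
    add_zero, add_zero]

lemma act_scalar₂ (h2 : ∀ x : S, D.e2 • x = x) (ha0 : ∀ x : S, D.a • x = 0)
    (hb0 : ∀ x : S, D.b • x = 0) (u : A) (x : S) :
    ∃ c : k, u • x = algebraMap k A c • x := by
  obtain ⟨c0, c1, c2, c3, hc⟩ := decomp D u
  refine ⟨c1, ?_⟩
  rw [hc, add_smul, add_smul, add_smul]
  rw [Algebra.smul_def c0, Algebra.smul_def c1, Algebra.smul_def c2, Algebra.smul_def c3]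
  rw [mul_smul, mul_smul, mul_smul, mul_smul]
  rw [h2, e1_act_zero D h2, ha0, hb0, smul_zero, smul_zero, smul_zero, add_zero,
    add_zero, zero_add]

lemma scalar_ne_zero {c : k} {s : S} (hs : s ≠ 0) (h : algebraMap k A c • s = 0) : c = 0 := by
  by_contra hc
  apply hs
  have : algebraMap k A c⁻¹ • (algebraMap k A c • s) = s := by
    rw [smul_smul, ← map_mul, inv_mul_cancel₀ hc, map_one, one_smul]
  rw [← this, h, smul_zero]

lemma exists_span {s : S} (hS : IsSimpleModule A S) (hs : s ≠ 0)
    (hsc : ∀ (u : A) (x : S), ∃ c : k, u • x = algebraMap k A c • x) (t : S) :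
    ∃ c : k, algebraMap k A c • s = t := by
  have hspan : Submodule.span A {s} = ⊤ := by
    rcases eq_bot_or_eq_top (Submodule.span A {s}) with h | h
    · exact absurd (Submodule.span_singleton_eq_bot.mp h) hs
    · exact h
  have ht : t ∈ Submodule.span A {s} := hspan ▸ Submodule.mem_top
  obtain ⟨u, hu⟩ := Submodule.mem_span_singleton.mp ht
  obtain ⟨c, hc⟩ := hsc u s
  exact ⟨c, by rw [← hc, hu]⟩

end Simple

/-! ### The projective resolution of `S₁` -/

section Resolution

variable {S : Type} [AddCommGroup S] [Module A S]

def pi0 (s : S) : M1 D ⟶ ModuleCat.of A S :=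
  ModuleCat.ofHom
    { toFun := fun x => x.1 • s
      map_add' := fun x y => by
        show (x.1 + y.1) • s = x.1 • s + y.1 • s
        rw [add_smul]
      map_smul' := fun r x => by
        show (r * x.1) • s = r • (x.1 • s)
        rw [mul_smul] }

lemma d10_pi0 (ha0 : ∀ x : S, D.a • x = 0) (s : S) :
    (cx D).d 1 0 ≫ pi0 D s = 0 := by
  rw [cx_d D 0]
  exact comp_ra_eq_zero D ha0 (pi0 D s)

lemma pi0_surjective (hS : IsSimpleModule A S)
    (hact : ∀ x : S, D.e1 • x = x ∧ D.a • x = 0 ∧ D.b • x = 0)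
    {s : S} (hs : s ≠ 0) : Function.Surjective (pi0 D s) := by
  intro t
  obtain ⟨c, hc⟩ := exists_span hS hs
    (act_scalar₁ D (fun x => (hact x).1) (fun x => (hact x).2.1) (fun x => (hact x).2.2)) t
  refine ⟨⟨algebraMap k A c * D.e1, ?_⟩, ?_⟩
  · exact Submodule.mem_span_singleton.mpr ⟨algebraMap k A c, rfl⟩
  · show (algebraMap k A c * D.e1) • s = t
    rw [mul_smul, (hact s).1, hc]

lemma pi0_exact (hact : ∀ x : S, D.e1 • x = x ∧ D.a • x = 0 ∧ D.b • x = 0)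
    {s : S} (hs : s ≠ 0) (x : P1 D) (hx : (pi0 D s) x = 0) :
    ∃ y : P2 D, raL D y = x := by
  obtain ⟨c, d, hcd⟩ := (mem_P1_iff D).mp x.2
  have hx' : x.1 • s = 0 := hx
  rw [hcd, add_smul, Algebra.smul_def c, Algebra.smul_def d, mul_smul, mul_smul,
    (hact s).1, (hact s).2.1, smul_zero, add_zero] at hx'
  have hc : c = 0 := scalar_ne_zero hs hx'
  refine ⟨⟨d • D.e2, ?_⟩, ?_⟩
  · rw [← algebraMap_smul A d D.e2]
    exact Submodule.smul_mem _ _ (e2_mem D)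
  · apply Subtype.ext
    show (d • D.e2) * D.a = x.1
    rw [smul_mul_assoc, e2a D, hcd, hc, zero_smul, zero_add]

def resolution (hS : IsSimpleModule A S)
    (hact : ∀ x : S, D.e1 • x = x ∧ D.a • x = 0 ∧ D.b • x = 0)
    {s : S} (hs : s ≠ 0) : ProjectiveResolution (ModuleCat.of A S) where
  complex := cx D
  projective := cx_proj D
  π := (ChainComplex.toSingle₀Equiv _ _).symm
    ⟨pi0 D s, d10_pi0 D (fun x => (hact x).2.1) s⟩
  quasiIso := ⟨fun n => by
    cases n with
    | zero =>
      rw [ChainComplex.quasiIsoAt₀_iff, ShortComplex.quasiIso_iff_of_zeros']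
      · constructor
        · rw [ShortComplex.moduleCat_exact_iff]
          intro x hx
          have hx' : (pi0 D s) x = 0 := hx
          obtain ⟨y, hy⟩ := pi0_exact D hact hs x hx'
          refine ⟨y, ?_⟩
          show ((cx D).d 1 0) y = x
          rw [cx_d D 0]
          exact hy
        · rw [ModuleCat.epi_iff_surjective]
          exact fun t => pi0_surjective D hS hact hs t
      · rfl
      · rfl
      · rfl
    | succ n =>
      rw [quasiIsoAt_iff_exactAt' _ _ (ChainComplex.exactAt_succ_single_obj _ _)]
      exact cx_exactAt_succ D n⟩

end Resolution

/-! ### Computing Ext via the resolution -/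

section ExtCalc

lemma r_comp_zero (Y : ModuleCat A) (hYa : ∀ y : Y, D.a • y = 0)
    (hYb : ∀ y : Y, D.b • y = 0) (sb : Bool) (g : Q D sb ⟶ Y) :
    r D sb ≫ g = 0 := by
  cases sb
  · exact comp_rb_eq_zero D hYb g
  · exact comp_ra_eq_zero D hYa g

lemma yoneda_d_zero (Y : ModuleCat A) (hYa : ∀ y : Y, D.a • y = 0)
    (hYb : ∀ y : Y, D.b • y = 0) (i j : ℕ) :
    ((cx D).linearYonedaObj k Y).d i j = 0 := by
  apply ModuleCat.hom_ext
  apply LinearMap.ext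
  intro g
  show (cx D).d j i ≫ g = 0
  by_cases hij : j = i + 1
  · subst hij
    rw [cx_d D i]
    exact r_comp_zero D Y hYa hYb (par i) g
  · rw [(cx D).shape j i (by simp only [ComplexShape.down_Rel]; omega)]
    exact Limits.zero_comp

/-- homology of a complex with zero differentials -/
def homologyIsoOfZeroD (K : CochainComplex (ModuleCat k) ℕ) (hK : ∀ i j, K.d i j = 0)
    (n : ℕ) : K.homology n ≅ K.X n :=
  (ShortComplex.HomologyData.ofZeros (K.sc n) (hK _ _) (hK _ _)).left.homologyIso

def extIso {S : Type} [AddCommGroup S] [Module A S] (hS : IsSimpleModule A S)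
    (hact : ∀ x : S, D.e1 • x = x ∧ D.a • x = 0 ∧ D.b • x = 0)
    {s : S} (hs : s ≠ 0) (n : ℕ) (Y : ModuleCat A)
    (hYa : ∀ y : Y, D.a • y = 0) (hYb : ∀ y : Y, D.b • y = 0) :
    ((Ext k (ModuleCat A) n).obj (Opposite.op (ModuleCat.of A S))).obj Y ≅
      ModuleCat.of k (Q D (par n) ⟶ Y) :=
  (resolution D hS hact hs).isoExt n Y ≪≫
    homologyIsoOfZeroD ((cx D).linearYonedaObj k Y) (yoneda_d_zero D Y hYa hYb) n

end ExtCalc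

/-! ### The Hom spaces out of `P1`, `P2` -/

section HomCalc

open ModuleCat

variable {S : Type} [AddCommGroup S] [Module A S]

lemma hom_ext_zero₁ (h1 : ∀ x : S, D.e1 • x = 0) (h : M1 D ⟶ ModuleCat.of A S) :
    h = 0 := by
  apply ModuleCat.hom_ext
  apply LinearMap.ext
  intro x
  show h x = 0
  have he : e1' D = D.e1 • e1' D := by
    apply Subtype.ext
    show D.e1 = D.e1 * D.e1
    rw [D.he1]
  have h0 : h (e1' D) = 0 := by
    rw [he, map_smul, h1]
  rw [← P1_gen D x, map_smul, h0, smul_zero]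

lemma hom_ext_zero₂ (h2 : ∀ x : S, D.e2 • x = 0) (h : M2 D ⟶ ModuleCat.of A S) :
    h = 0 := by
  apply ModuleCat.hom_ext
  apply LinearMap.ext
  intro x
  show h x = 0
  have he : e2' D = D.e2 • e2' D := by
    apply Subtype.ext
    show D.e2 = D.e2 * D.e2
    rw [D.he2]
  have h0 : h (e2' D) = 0 := by
    rw [he, map_smul, h2]
  rw [← P2_gen D x, map_smul, h0, smul_zero]

lemma subsingleton_hom₁ (h1 : ∀ x : S, D.e1 • x = 0) :
    Subsingleton (M1 D ⟶ ModuleCat.of A S) :=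
  ⟨fun f g => by rw [hom_ext_zero₁ D h1 f, hom_ext_zero₁ D h1 g]⟩

lemma subsingleton_hom₂ (h2 : ∀ x : S, D.e2 • x = 0) :
    Subsingleton (M2 D ⟶ ModuleCat.of A S) :=
  ⟨fun f g => by rw [hom_ext_zero₂ D h2 f, hom_ext_zero₂ D h2 g]⟩

lemma finrank_hom₁ (hS : IsSimpleModule A S)
    (hact : ∀ x : S, D.e1 • x = x ∧ D.a • x = 0 ∧ D.b • x = 0) :
    Module.finrank k (M1 D ⟶ ModuleCat.of A S) = 1 := by
  have := IsSimpleModule.nontrivial A S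
  obtain ⟨s, hs⟩ := exists_ne (0 : S)
  refine finrank_eq_one (pi0 D s) ?_ ?_
  · intro h
    have h0 : D.e1 • s = 0 := congrArg (fun f : M1 D ⟶ ModuleCat.of A S => f (e1' D)) h
    exact hs (by rw [← (hact s).1]; exact h0)
  · intro g
    obtain ⟨c, hc⟩ := exists_span hS hs
      (act_scalar₁ D (fun x => (hact x).1) (fun x => (hact x).2.1) (fun x => (hact x).2.2))
      (g (e1' D))
    refine ⟨c, ?_⟩
    apply ModuleCat.hom_ext
    apply LinearMap.ext
    intro x
    letI : Module k S := ModuleCat.moduleOfAlgebraModule (ModuleCat.of A S)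
    letI : IsScalarTower k A S :=
      ModuleCat.isScalarTower_of_algebra_moduleCat (ModuleCat.of A S)
    rw [ModuleCat.hom_smul, LinearMap.smul_apply]
    have hg : g x = x.1 • g (e1' D) := by
      conv_lhs => rw [← P1_gen D x]
      rw [map_smul]
    have hf : (pi0 D s) x = x.1 • s := rfl
    rw [hg, ← hc, hf, ← algebraMap_smul A c (x.1 • s), smul_smul, smul_smul,
      Algebra.commutes]

def pi0' (s : S) : M2 D ⟶ ModuleCat.of A S :=
  ModuleCat.ofHom
    { toFun := fun x => x.1 • s
      map_add' := fun x y => by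
        show (x.1 + y.1) • s = x.1 • s + y.1 • s
        rw [add_smul]
      map_smul' := fun r x => by
        show (r * x.1) • s = r • (x.1 • s)
        rw [mul_smul] }

lemma finrank_hom₂ (hS : IsSimpleModule A S)
    (hact : ∀ x : S, D.e2 • x = x ∧ D.a • x = 0 ∧ D.b • x = 0) :
    Module.finrank k (M2 D ⟶ ModuleCat.of A S) = 1 := by
  have := IsSimpleModule.nontrivial A S
  obtain ⟨s, hs⟩ := exists_ne (0 : S)
  refine finrank_eq_one (pi0' D s) ?_ ?_
  · intro h
    have h0 : D.e2 • s = 0 := congrArg (fun f : M2 D ⟶ ModuleCat.of A S => f (e2' D)) h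
    exact hs (by rw [← (hact s).1]; exact h0)
  · intro g
    obtain ⟨c, hc⟩ := exists_span hS hs
      (act_scalar₂ D (fun x => (hact x).1) (fun x => (hact x).2.1) (fun x => (hact x).2.2))
      (g (e2' D))
    refine ⟨c, ?_⟩
    apply ModuleCat.hom_ext
    apply LinearMap.ext
    intro x
    letI : Module k S := ModuleCat.moduleOfAlgebraModule (ModuleCat.of A S)
    letI : IsScalarTower k A S :=
      ModuleCat.isScalarTower_of_algebra_moduleCat (ModuleCat.of A S)
    rw [ModuleCat.hom_smul, LinearMap.smul_apply]
    have hg : g x = x.1 • g (e2' D) := by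
      conv_lhs => rw [← P2_gen D x]
      rw [map_smul]
    have hf : (pi0' D s) x = x.1 • s := rfl
    rw [hg, ← hc, hf, ← algebraMap_smul A c (x.1 • s), smul_smul, smul_smul,
      Algebra.commutes]

end HomCalc

end

end PiA2Aux

open PiA2Aux in
/-- For the preprojective algebra `ΠA₂`, with `S₁, S₂` the simple
modules at the two vertices, `Extⁿ(S₁,S₁)` is 1-dimensional over `k` for even `n`
and vanishes for odd `n`, while `Extⁿ(S₁,S₂)` is 1-dimensional for odd `n` and
vanishes for even `n`. -/
theorem piA2_ext_simples
    (S1 S2 : Type) [AddCommGroup S1] [Module A S1] [AddCommGroup S2] [Module A S2]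
    (hS1 : IsSimpleModule A S1) (hS2 : IsSimpleModule A S2)
    (hact1 : ∀ x : S1, D.e1 • x = x ∧ D.a • x = 0 ∧ D.b • x = 0)
    (hact2 : ∀ x : S2, D.e2 • x = x ∧ D.a • x = 0 ∧ D.b • x = 0)
    (n : ℕ) :
    (Even n → Module.finrank k
      (((Ext k (ModuleCat A) n).obj (Opposite.op (ModuleCat.of A S1))).obj
        (ModuleCat.of A S1)) = 1) ∧
    (Odd n → Subsingleton
      (((Ext k (ModuleCat A) n).obj (Opposite.op (ModuleCat.of A S1))).obj
        (ModuleCat.of A S1))) ∧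
    (Odd n → Module.finrank k
      (((Ext k (ModuleCat A) n).obj (Opposite.op (ModuleCat.of A S1))).obj
        (ModuleCat.of A S2)) = 1) ∧
    (Even n → Subsingleton
      (((Ext k (ModuleCat A) n).obj (Opposite.op (ModuleCat.of A S1))).obj
        (ModuleCat.of A S2))) := by
  have := IsSimpleModule.nontrivial A S1
  obtain ⟨s, hs⟩ := exists_ne (0 : S1)
  have hY1a : ∀ y : (ModuleCat.of A S1), D.a • y = 0 := fun y => (hact1 y).2.1
  have hY1b : ∀ y : (ModuleCat.of A S1), D.b • y = 0 := fun y => (hact1 y).2.2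
  have hY2a : ∀ y : (ModuleCat.of A S2), D.a • y = 0 := fun y => (hact2 y).2.1
  have hY2b : ∀ y : (ModuleCat.of A S2), D.b • y = 0 := fun y => (hact2 y).2.2
  refine ⟨?_, ?_, ?_, ?_⟩
  · intro hn
    have hp : par n = true := (par_true_iff n).mpr hn
    have iso := extIso D hS1 hact1 hs n (ModuleCat.of A S1) hY1a hY1b
    rw [hp] at iso
    rw [LinearEquiv.finrank_eq iso.toLinearEquiv]
    exact finrank_hom₁ D hS1 hact1
  · intro hn
    have hp : par n = false := by
      cases h : par n
      · rfl
      · exact absurd ((par_true_iff n).mp h) (Nat.not_even_iff_odd.mpr hn)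
    have iso := extIso D hS1 hact1 hs n (ModuleCat.of A S1) hY1a hY1b
    rw [hp] at iso
    have hsub : Subsingleton (M2 D ⟶ ModuleCat.of A S1) :=
      subsingleton_hom₂ D (e2_act_zero D (fun x => (hact1 x).1))
    exact @Equiv.subsingleton _ _ iso.toLinearEquiv.toEquiv hsub
  · intro hn
    have hp : par n = false := by
      cases h : par n
      · rfl
      · exact absurd ((par_true_iff n).mp h) (Nat.not_even_iff_odd.mpr hn)
    have iso := extIso D hS1 hact1 hs n (ModuleCat.of A S2) hY2a hY2b
    rw [hp] at iso
    rw [LinearEquiv.finrank_eq iso.toLinearEquiv]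
    exact finrank_hom₂ D hS2 hact2
  · intro hn
    have hp : par n = true := (par_true_iff n).mpr hn
    have iso := extIso D hS1 hact1 hs n (ModuleCat.of A S2) hY2a hY2b
    rw [hp] at iso
    have hsub : Subsingleton (M1 D ⟶ ModuleCat.of A S2) :=
      subsingleton_hom₁ D (e1_act_zero D (fun x => (hact2 x).1))
    exact @Equiv.subsingleton _ _ iso.toLinearEquiv.toEquiv hsub
end

section
/- Every indecomposable finite-dimensional representation of the A_2 quiver over a field k is isomorphic to exactly one of: P (with P(X)=k, P(Y)=k, P(f)=id), S_1 (with S_1(X)=k, S_1(Y)=0), or S_2 (with S_2(X)=0, S_2(Y)=k). -/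
/-- A finite-dimensional representation of the `A₂` quiver `X →f Y` over `k`:
vector spaces `V = M(X)`, `W = M(Y)` and a linear map `f : V → W`. -/
structure RepA2 (k : Type) [Field k] : Type 1 where
  V : Type
  W : Type
  [grpV : AddCommGroup V]
  [grpW : AddCommGroup W]
  [modV : Module k V]
  [modW : Module k W]
  f : V →ₗ[k] W

attribute [instance] RepA2.grpV RepA2.grpW RepA2.modV RepA2.modW

variable {k : Type} [Field k]

/-- Isomorphism of representations of the `A₂` quiver. -/
def RepA2.Iso (M N : RepA2 k) : Prop :=
  ∃ (eV : M.V ≃ₗ[k] N.V) (eW : M.W ≃ₗ[k] N.W), ∀ v : M.V, eW (M.f v) = N.f (eV v)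

/-- A representation is indecomposable if it is nonzero and admits no nontrivial
direct sum decomposition into subrepresentations. -/
def RepA2.Indecomposable (M : RepA2 k) : Prop :=
  (¬ (Subsingleton M.V ∧ Subsingleton M.W)) ∧
  ∀ (V1 V2 : Submodule k M.V) (W1 W2 : Submodule k M.W),
    IsCompl V1 V2 → IsCompl W1 W2 →
    Submodule.map M.f V1 ≤ W1 → Submodule.map M.f V2 ≤ W2 →
    (V1 = ⊥ ∧ W1 = ⊥) ∨ (V2 = ⊥ ∧ W2 = ⊥)

/-- The indecomposable projective representation `P : k →id k`. -/
def RepP (k : Type) [Field k] : RepA2 k := ⟨k, k, LinearMap.id⟩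

/-- The simple representation `S₁ : k → 0`. -/
def RepS1 (k : Type) [Field k] : RepA2 k := ⟨k, PUnit, 0⟩

/-- The simple representation `S₂ : 0 → k`. -/
def RepS2 (k : Type) [Field k] : RepA2 k := ⟨PUnit, k, 0⟩

section Aux

variable {k : Type} [Field k]

lemma aux_not_k_punit {A : Type} [AddCommGroup A] [Module k A]
    (e1 : A ≃ₗ[k] k) (e2 : A ≃ₗ[k] PUnit) : False := by
  have : Subsingleton k := (e1.symm.trans e2).toEquiv.subsingleton
  exact one_ne_zero (Subsingleton.elim (1 : k) 0)

noncomputable def auxDimOne {A : Type} [AddCommGroup A] [Module k A]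
    [FiniteDimensional k A] (v : A) (hv : v ≠ 0)
    (hspan : Submodule.span k {v} = ⊤) : A ≃ₗ[k] k := by
  have h1 : Module.finrank k A = 1 := by
    refine finrank_eq_one v hv fun w => ?_
    have hw : w ∈ Submodule.span k {v} := hspan ▸ Submodule.mem_top
    obtain ⟨c, hc⟩ := Submodule.mem_span_singleton.mp hw
    exact ⟨c, hc⟩
  exact LinearEquiv.ofFinrankEq _ _ (by rw [h1, Module.finrank_self])

lemma aux_subsingleton_of_top_eq_bot {A : Type} [AddCommGroup A] [Module k A]
    (h : (⊤ : Submodule k A) = ⊥) : Subsingleton A :=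
  subsingleton_of_forall_eq 0 fun x =>
    (Submodule.eq_bot_iff ⊤).mp h x trivial

end Aux

/-- Every indecomposable finite-dimensional representation of the
`A₂` quiver over a field `k` is isomorphic to exactly one of `P`, `S₁`, `S₂`. -/
theorem a2_indecomposable_classification
    (M : RepA2 k) [FiniteDimensional k M.V] [FiniteDimensional k M.W]
    (hM : M.Indecomposable) :
    (M.Iso (RepP k) ∧ ¬ M.Iso (RepS1 k) ∧ ¬ M.Iso (RepS2 k)) ∨
    (¬ M.Iso (RepP k) ∧ M.Iso (RepS1 k) ∧ ¬ M.Iso (RepS2 k)) ∨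
    (¬ M.Iso (RepP k) ∧ ¬ M.Iso (RepS1 k) ∧ M.Iso (RepS2 k)) := by
  obtain ⟨hnz, hind⟩ := hM
  obtain ⟨C, hC⟩ := Submodule.exists_isCompl (LinearMap.ker M.f)
  obtain ⟨D, hD⟩ := Submodule.exists_isCompl (LinearMap.range M.f)
  have hCle : Submodule.map M.f C ≤ LinearMap.range M.f := by
    rintro w ⟨x, -, rfl⟩; exact ⟨x, rfl⟩
  have hkle : Submodule.map M.f (LinearMap.ker M.f) ≤ D := by
    rintro w ⟨x, hx, rfl⟩
    have hx0 : M.f x = 0 := hx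
    simp [hx0]
  rcases hind C (LinearMap.ker M.f) (LinearMap.range M.f) D hC.symm hD hCle hkle with
    ⟨hCbot, hrange⟩ | ⟨hkbot, hDbot⟩
  · -- f = 0
    have hf0 : M.f = 0 := LinearMap.range_eq_bot.mp hrange
    rcases hind ⊤ ⊥ ⊥ ⊤ isCompl_top_bot isCompl_bot_top (by simp [hf0]) (by simp) with
      ⟨hVtop, -⟩ | ⟨-, hWtop⟩
    · -- V subsingleton, iso to S2
      have hsV : Subsingleton M.V := aux_subsingleton_of_top_eq_bot hVtop
      have hnW : ¬ Subsingleton M.W := fun h => hnz ⟨hsV, h⟩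
      have : Nontrivial M.W := not_subsingleton_iff_nontrivial.mp hnW
      obtain ⟨w, hw⟩ := exists_ne (0 : M.W)
      obtain ⟨Cw, hCw⟩ := Submodule.exists_isCompl (Submodule.span k {w})
      rcases hind ⊥ ⊤ (Submodule.span k {w}) Cw isCompl_bot_top hCw
        (by simp) (by simp [hf0]) with ⟨-, hspbot⟩ | ⟨-, hCwbot⟩
      · exact absurd hspbot (by simpa using hw)
      · have hspan : Submodule.span k {w} = ⊤ := by
          simpa [hCwbot] using hCw.sup_eq_top
        have eW : M.W ≃ₗ[k] k := auxDimOne w hw hspan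
        have eV : M.V ≃ₗ[k] PUnit := LinearEquiv.ofSubsingleton _ _
        have hiso : M.Iso (RepS2 k) :=
          ⟨eV, eW, fun v => by simp [hf0, RepS2]; exact map_zero eW⟩
        refine Or.inr (Or.inr ⟨?_, ?_, hiso⟩)
        · rintro ⟨eV', -, -⟩; exact aux_not_k_punit eV' eV
        · rintro ⟨eV', -, -⟩; exact aux_not_k_punit eV' eV
    · -- W subsingleton, iso to S1
      have hsW : Subsingleton M.W := aux_subsingleton_of_top_eq_bot hWtop
      have hnV : ¬ Subsingleton M.V := fun h => hnz ⟨h, hsW⟩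
      have : Nontrivial M.V := not_subsingleton_iff_nontrivial.mp hnV
      obtain ⟨v, hv⟩ := exists_ne (0 : M.V)
      obtain ⟨Cv, hCv⟩ := Submodule.exists_isCompl (Submodule.span k {v})
      rcases hind (Submodule.span k {v}) Cv ⊥ ⊤ hCv isCompl_bot_top
        (by simp [hf0]) (by simp) with ⟨hspbot, -⟩ | ⟨hCvbot, -⟩
      · exact absurd hspbot (by simpa using hv)
      · have hspan : Submodule.span k {v} = ⊤ := by
          simpa [hCvbot] using hCv.sup_eq_top
        have eV : M.V ≃ₗ[k] k := auxDimOne v hv hspan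
        have eW : M.W ≃ₗ[k] PUnit := LinearEquiv.ofSubsingleton _ _
        have hiso : M.Iso (RepS1 k) :=
          ⟨eV, eW, fun v => by simp [hf0, RepS1]⟩
        refine Or.inr (Or.inl ⟨?_, hiso, ?_⟩)
        · rintro ⟨-, eW', -⟩; exact aux_not_k_punit eW' eW
        · rintro ⟨-, eW', -⟩; exact aux_not_k_punit eW' eW
  · -- f bijective, iso to P
    have hrtop : LinearMap.range M.f = ⊤ := by
      simpa [hDbot] using hD.sup_eq_top
    have hbij : Function.Bijective M.f :=
      ⟨LinearMap.ker_eq_bot.mp hkbot, LinearMap.range_eq_top.mp hrtop⟩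
    let e : M.V ≃ₗ[k] M.W := LinearEquiv.ofBijective M.f hbij
    have hnV : ¬ Subsingleton M.V := by
      intro h
      have : Subsingleton M.W := e.symm.toEquiv.subsingleton
      exact hnz ⟨h, this⟩
    have : Nontrivial M.V := not_subsingleton_iff_nontrivial.mp hnV
    obtain ⟨v, hv⟩ := exists_ne (0 : M.V)
    obtain ⟨Cv, hCv⟩ := Submodule.exists_isCompl (Submodule.span k {v})
    have hmap : ∀ p : Submodule k M.V,
        Submodule.map M.f p = Submodule.map (e : M.V →ₗ[k] M.W) p := fun p => rfl
    have hWcompl : IsCompl (Submodule.map M.f (Submodule.span k {v}))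
        (Submodule.map M.f Cv) := by
      rw [hmap, hmap]
      exact (Submodule.orderIsoMapComap e).isCompl hCv
    rcases hind (Submodule.span k {v}) Cv _ _ hCv hWcompl le_rfl le_rfl with
      ⟨hspbot, -⟩ | ⟨hCvbot, -⟩
    · exact absurd hspbot (by simpa using hv)
    · have hspan : Submodule.span k {v} = ⊤ := by
        simpa [hCvbot] using hCv.sup_eq_top
      have eV : M.V ≃ₗ[k] k := auxDimOne v hv hspan
      let eW : M.W ≃ₗ[k] k := e.symm.trans eV
      have hiso : M.Iso (RepP k) := by
        refine ⟨eV, eW, fun x => ?_⟩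
        show eV (e.symm (M.f x)) = LinearMap.id (eV x)
        have : e.symm (M.f x) = x := e.symm_apply_apply x
        rw [this, LinearMap.id_apply]
      refine Or.inl ⟨hiso, ?_, ?_⟩
      · rintro ⟨-, eW', -⟩; exact aux_not_k_punit eW eW'
      · rintro ⟨eV', -, -⟩; exact aux_not_k_punit eV eV'
end
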